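/- If T is an orthogonal matrix in ℝ^{n×n} mapping C_α into C_α, with 3 ≤ α < n (α ≠ 2 and α ≠ n), then every entry of T lies in {−1, −1/2, 0, 1/2, 1}. -/

import Mathlib

noncomputable def code (n α : ℕ) : Set (EuclideanSpace ℝ (Fin n)) :=
  {c | (∀ i, c i = 0 ∨ c i = 1 / Real.sqrt α ∨ c i = -(1 / Real.sqrt α)) ∧
       (Finset.univ.filter (fun i => c i ≠ 0)).card = α}

lemma mem_code_aux (n α : ℕ) (hα : 0 < α) (S : Finset (Fin n)) (hS : S.card = α)
    (ε : Fin n → ℝ) (hε : ∀ k, ε k = 1 ∨ ε k = -1) :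
    WithLp.toLp 2 (fun k => if k ∈ S then ε k / Real.sqrt α else 0) ∈ code n α := by
  have hs : (0:ℝ) < Real.sqrt α := Real.sqrt_pos.2 (by exact_mod_cast hα)
  constructor
  · intro k
    by_cases hk : k ∈ S
    · rcases hε k with h | h
      · right; left; simp [hk, h]
      · right; right; simp [hk, h, neg_div]
    · left; simp [hk]
  · have : (Finset.univ.filter (fun k => WithLp.toLp 2 (fun k => if k ∈ S then ε k / Real.sqrt α else 0) k ≠ 0)) = S := by
      ext k
      by_cases hk : k ∈ S
      · rcases hε k with h | h <;> simp [hk, h, hs.ne']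
      · simp [hk]
    rw [this, hS]

theorem stmt_4 (n α : ℕ) (hα : 3 ≤ α) (hαn : α < n)
    (T : Matrix (Fin n) (Fin n) ℝ) (hT : T ∈ Matrix.orthogonalGroup (Fin n) ℝ)
    (hmap : ∀ c ∈ code n α, (WithLp.toLp 2 (T.mulVec c) : EuclideanSpace ℝ (Fin n)) ∈ code n α) :
    ∀ i j, T i j ∈ ({-1, -(1/2), 0, 1/2, 1} : Set ℝ) := by
  intro i j
  have hs : (0:ℝ) < Real.sqrt α := Real.sqrt_pos.2 (by positivity)
  obtain ⟨t, ht_sub, ht_card⟩ := Finset.exists_subset_card_eq (s := Finset.univ.erase j) (n := α - 1)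
    (by rw [Finset.card_erase_of_mem (Finset.mem_univ j), Finset.card_univ, Fintype.card_fin]; omega)
  have hjt : j ∉ t := fun h => (Finset.mem_erase.1 (ht_sub h)).1 rfl
  set S : Finset (Fin n) := insert j t with hSdef
  have hScard : S.card = α := by
    rw [hSdef, Finset.card_insert_of_notMem hjt, ht_card]; omega
  set εp : Fin n → ℝ := fun _ => 1 with hεp
  set εm : Fin n → ℝ := fun k => if k = j then -1 else 1 with hεm
  set cp : EuclideanSpace ℝ (Fin n) := WithLp.toLp 2 (fun k => if k ∈ S then εp k / Real.sqrt α else 0) with hcp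
  set cm : EuclideanSpace ℝ (Fin n) := WithLp.toLp 2 (fun k => if k ∈ S then εm k / Real.sqrt α else 0) with hcm
  have hcpmem := hmap cp (mem_code_aux n α (by omega) S hScard εp (fun k => Or.inl rfl))
  have hcmmem := hmap cm (mem_code_aux n α (by omega) S hScard εm (fun k => by
    by_cases hk : k = j <;> simp [hεm, hk]))
  have hx := hcpmem.1 i
  simp only [PiLp.toLp_apply] at hx
  have hy := hcmmem.1 i
  simp only [PiLp.toLp_apply] at hy
  have hdiff : (T.mulVec cp) i - (T.mulVec cm) i = T i j * (2 / Real.sqrt α) := by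
    simp only [Matrix.mulVec, dotProduct]
    rw [← Finset.sum_sub_distrib]
    rw [Finset.sum_eq_single j]
    · have hjS : j ∈ S := Finset.mem_insert_self j t
      simp only [hcp, hcm, hεp, hεm, PiLp.toLp_apply, hjS, if_pos, if_pos rfl]
      ring
    · intro k _ hk
      simp [hcp, hcm, hεp, hεm, hk]
    · simp
  have key : T i j = ((T.mulVec cp) i - (T.mulVec cm) i) * Real.sqrt α / 2 := by
    rw [hdiff]; field_simp
  rcases hx with h1 | h1 | h1 <;> rcases hy with h2 | h2 | h2 <;>
    rw [h1, h2] at key <;> simp only [Set.mem_insert_iff, Set.mem_singleton_iff] <;>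
    [skip; skip; skip; skip; skip; skip; skip; skip; skip] <;>
    field_simp at key <;> first
      | (left; linarith)
      | (right; left; linarith)
      | (right; right; left; linarith)
      | (right; right; right; left; linarith)
      | (right; right; right; right; linarith)
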